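/- There exists a constant c > 0, depending only on P, α₁ and α₂, such that for every Λ ∈ V₊ and every λ ∈ ℝ one has H¹({y ∈ ∂P ∩ V₊ : ⟨Λ,y⟩ ≥ λ}) ≥ c · H¹({y ∈ P ∩ ∂V₊ : ⟨Λ,y⟩ ≥ λ}); i.e. for any W-dominate simple piecewise linear function φ = max{⟨Λ,·⟩ − λ, 0} on P₊, the part of the boundary of its support lying on the outer boundary ∂P of P₊ has 1-dimensional measure at least c times that of the part lying on the Weyl walls ∂V₊. -/

import Mathlib

open MeasureTheory RealInnerProductSpace
open scoped ENNReal

noncomputable section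

abbrev Euc2 := EuclideanSpace ℝ (Fin 2)

open scoped NNReal

/-- Auxiliary lemma: the wall `{⟪α,·⟫ = 0}` part of the chamber boundary inside a
compact set `P` has `H¹` measure controlled by the part of `frontier P` inside the chamber. -/
lemma wall_bound (α β : Euc2) (hind : LinearIndependent ℝ ![α, β]) (hobtuse : ⟪α, β⟫ ≤ 0)
    (P : Set Euc2) (hPc : IsCompact P) :
    ∃ K : ℝ, 0 < K ∧ ∀ (Λ : Euc2), 0 ≤ ⟪α, Λ⟫ → 0 ≤ ⟪β, Λ⟫ → ∀ lam : ℝ,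
      μH[(1 : ℝ)] {y : Euc2 | y ∈ P ∧ ⟪α, y⟫ = 0 ∧ 0 ≤ ⟪β, y⟫ ∧ lam ≤ ⟪Λ, y⟫} ≤
        ENNReal.ofReal K *
          μH[(1 : ℝ)] {y : Euc2 | y ∈ frontier P ∧ 0 ≤ ⟪α, y⟫ ∧ 0 ≤ ⟪β, y⟫ ∧ lam ≤ ⟪Λ, y⟫} := by
  obtain ⟨hβ0, hno⟩ : β ≠ 0 ∧ ∀ a : ℝ, a • β ≠ α := by
    simpa using linearIndependent_fin2.mp hind
  have hα0 : α ≠ 0 := by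
    have := hind.ne_zero 0; simpa using this
  have hαα : (0:ℝ) < ⟪α, α⟫ := by
    rcases lt_or_eq_of_le (real_inner_self_nonneg (x := α)) with h | h
    · exact h
    · exact absurd (inner_self_eq_zero.mp h.symm) hα0
  have hββ : (0:ℝ) < ⟪β, β⟫ := by
    rcases lt_or_eq_of_le (real_inner_self_nonneg (x := β)) with h | h
    · exact h
    · exact absurd (inner_self_eq_zero.mp h.symm) hβ0
  set c1 : ℝ := ⟪α, β⟫ / ⟪α, α⟫ with hc1
  set c2 : ℝ := ⟪α, β⟫ / ⟪β, β⟫ with hc2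
  set u : Euc2 := β - c1 • α with hu_def
  set w : Euc2 := α - c2 • β with hw_def
  have hαu : ⟪α, u⟫ = 0 := by
    rw [hu_def, inner_sub_right, real_inner_smul_right, hc1,
      div_mul_cancel₀ _ (ne_of_gt hαα), sub_self]
  have hβw : ⟪β, w⟫ = 0 := by
    rw [hw_def, inner_sub_right, real_inner_smul_right, hc2, real_inner_comm β α,
      div_mul_cancel₀ _ (ne_of_gt hββ), sub_self]
  have hβeq : β = u + c1 • α := by rw [hu_def]; abel
  have hαeq : α = w + c2 • β := by rw [hw_def]; abel
  have hβu : ⟪β, u⟫ = ⟪u, u⟫ := by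
    conv_lhs => rw [hβeq]
    rw [inner_add_left, real_inner_smul_left, hαu]; ring
  have hαw : ⟪α, w⟫ = ⟪w, w⟫ := by
    conv_lhs => rw [hαeq]
    rw [inner_add_left, real_inner_smul_left, hβw]; ring
  have hu0 : u ≠ 0 := by
    intro h
    have hβc : β = c1 • α := by
      have := sub_eq_zero.mp (hu_def ▸ h); exact this
    rcases eq_or_ne c1 0 with hc | hc
    · rw [hc, zero_smul] at hβc; exact hβ0 hβc
    · exact hno c1⁻¹ (by rw [hβc, smul_smul, inv_mul_cancel₀ hc, one_smul])
  have hw0 : w ≠ 0 := by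
    intro h
    have hαc : α = c2 • β := sub_eq_zero.mp (hw_def ▸ h)
    exact hno c2 hαc.symm
  have huu : (0:ℝ) < ⟪u, u⟫ := by
    rcases lt_or_eq_of_le (real_inner_self_nonneg (x := u)) with h | h
    · exact h
    · exact absurd (inner_self_eq_zero.mp h.symm) hu0
  have hww : (0:ℝ) < ⟪w, w⟫ := by
    rcases lt_or_eq_of_le (real_inner_self_nonneg (x := w)) with h | h
    · exact h
    · exact absurd (inner_self_eq_zero.mp h.symm) hw0
  -- decomposition of wall points
  have hspan : Submodule.span ℝ ({α, β} : Set Euc2) = ⊤ := by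
    apply Submodule.eq_top_of_finrank_eq
    have h1 : Set.range ![α, β] = {α, β} := by
      simp [Matrix.range_cons, Matrix.range_empty, Set.insert_def]
      ext z; constructor <;> rintro (h | h) <;> simp [h]
    rw [← h1, finrank_span_eq_card hind, finrank_euclideanSpace_fin]
    simp
  have hdec : ∀ y : Euc2, ⟪α, y⟫ = 0 → y = (⟪u, y⟫ / ⟪u, u⟫) • u := by
    intro y hy
    set t : ℝ := ⟪u, y⟫ / ⟪u, u⟫ with htdef
    set v : Euc2 := y - t • u with hvdef
    have hαv : ⟪α, v⟫ = 0 := by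
      rw [hvdef, inner_sub_right, real_inner_smul_right, hy, hαu]; ring
    have huv : ⟪u, v⟫ = 0 := by
      rw [hvdef, inner_sub_right, real_inner_smul_right, htdef,
        div_mul_cancel₀ _ (ne_of_gt huu), sub_self]
    have hβv : ⟪β, v⟫ = 0 := by
      conv_lhs => rw [hβeq]
      rw [inner_add_left, real_inner_smul_left, huv, hαv]; ring
    have hall : ∀ x ∈ Submodule.span ℝ ({α, β} : Set Euc2), ⟪x, v⟫ = 0 := by
      intro x hx
      induction hx using Submodule.span_induction with
      | mem x hx =>
        rcases hx with h | h
        · rw [h]; exact hαv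
        · rw [Set.mem_singleton_iff.mp h]; exact hβv
      | zero => simp
      | add x y _ _ hx hy => rw [inner_add_left, hx, hy]; ring
      | smul a x _ hx => rw [real_inner_smul_left, hx]; ring
    have hvv : ⟪v, v⟫ = 0 := hall v (by rw [hspan]; trivial)
    have : v = 0 := inner_self_eq_zero.mp hvv
    have := sub_eq_zero.mp (hvdef ▸ this)
    exact this
  obtain ⟨R, hR⟩ := hPc.isBounded.subset_closedBall 0
  -- the constant
  refine ⟨‖u‖ * (‖β‖ / ⟪u, u⟫),
    mul_pos (norm_pos_iff.mpr hu0) (div_pos (norm_pos_iff.mpr hβ0) huu), ?_⟩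
  intro Λ hΛα hΛβ lam
  have hΛw : 0 ≤ ⟪Λ, w⟫ := by
    have e1 : ⟪Λ, α⟫ = ⟪α, Λ⟫ := real_inner_comm _ _
    have e2 : ⟪Λ, β⟫ = ⟪β, Λ⟫ := real_inner_comm _ _
    have h2 : c2 ≤ 0 := div_nonpos_iff.mpr (Or.inr ⟨hobtuse, le_of_lt hββ⟩)
    rw [hw_def, inner_sub_right, real_inner_smul_right]
    nlinarith
  set A : Set Euc2 := {y : Euc2 | y ∈ P ∧ ⟪α, y⟫ = 0 ∧ 0 ≤ ⟪β, y⟫ ∧ lam ≤ ⟪Λ, y⟫} with hA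
  set B : Set Euc2 := {y : Euc2 | y ∈ frontier P ∧ 0 ≤ ⟪α, y⟫ ∧ 0 ≤ ⟪β, y⟫ ∧ lam ≤ ⟪Λ, y⟫}
    with hB
  set S₁ : Set ℝ := {t : ℝ | 0 ≤ t ∧ t • u ∈ P ∧ lam ≤ ⟪Λ, t • u⟫} with hS₁
  -- key construction: shoot a ray from the wall point into the chamber
  have key : ∀ t ∈ S₁, ∃ y ∈ B, ⟪β, y⟫ / ⟪u, u⟫ = t := by
    intro t ht
    obtain ⟨ht0, htP, htlam⟩ := ht
    set S : Set ℝ := {s : ℝ | 0 ≤ s ∧ t • u + s • w ∈ P} with hSdef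
    have hwn : (0:ℝ) < ‖w‖ := norm_pos_iff.mpr hw0
    have hS0 : (0:ℝ) ∈ S := ⟨le_refl 0, by simpa using htP⟩
    have hSc : IsClosed S := by
      have : S = Set.Ici (0:ℝ) ∩ ((fun s : ℝ => t • u + s • w) ⁻¹' P) := by
        ext s; simp [hSdef, Set.mem_Ici]
      rw [this]
      exact isClosed_Ici.inter (hPc.isClosed.preimage
        (continuous_const.add (continuous_id.smul continuous_const)))
    have hSsub : S ⊆ Set.Icc 0 ((R + ‖t • u‖) / ‖w‖) := by
      intro s hs
      refine ⟨hs.1, ?_⟩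
      have h1 : ‖t • u + s • w‖ ≤ R := by
        have := hR hs.2
        simpa [Metric.mem_closedBall, dist_zero_right] using this
      have h2 : ‖s • w‖ ≤ ‖t • u + s • w‖ + ‖t • u‖ := by
        calc ‖s • w‖ = ‖(t • u + s • w) - t • u‖ := by rw [add_sub_cancel_left]
        _ ≤ _ := norm_sub_le _ _
      have h3 : s * ‖w‖ ≤ R + ‖t • u‖ := by
        rw [← abs_of_nonneg hs.1, ← Real.norm_eq_abs, ← norm_smul]
        linarith
      exact (le_div_iff₀ hwn).mpr h3
    have hScomp : IsCompact S := IsCompact.of_isClosed_subset isCompact_Icc hSc hSsub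
    obtain ⟨s0, hs0S, hs0ub⟩ := hScomp.exists_isGreatest ⟨0, hS0⟩
    refine ⟨t • u + s0 • w, ⟨?_, ?_, ?_, ?_⟩, ?_⟩
    · -- frontier
      rw [hPc.isClosed.frontier_eq]
      refine ⟨hs0S.2, ?_⟩
      intro hIn
      rcases Metric.mem_nhds_iff.mp (mem_interior_iff_mem_nhds.mp hIn) with ⟨ε, hε, hball⟩
      set δ : ℝ := ε / (2 * ‖w‖) with hδdef
      have hδ : 0 < δ := by positivity
      have hmem : t • u + (s0 + δ) • w ∈ P := by
        apply hball
        rw [Metric.mem_ball, dist_eq_norm]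
        have hdiff : t • u + (s0 + δ) • w - (t • u + s0 • w) = δ • w := by
          rw [add_smul]; abel
        rw [hdiff, norm_smul, Real.norm_eq_abs, abs_of_pos hδ, hδdef]
        rw [div_mul_eq_mul_div, mul_comm (2:ℝ) ‖w‖, ← div_div,
          mul_div_assoc, div_self (ne_of_gt hwn), mul_one]
        linarith
      have : s0 + δ ∈ S := ⟨by linarith [hs0S.1], hmem⟩
      have := hs0ub this
      linarith
    · rw [inner_add_right, real_inner_smul_right, real_inner_smul_right, hαu, hαw]
      have := mul_nonneg hs0S.1 (le_of_lt hww)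
      linarith
    · rw [inner_add_right, real_inner_smul_right, real_inner_smul_right, hβu, hβw]
      have := mul_nonneg ht0 (le_of_lt huu)
      linarith
    · rw [inner_add_right, real_inner_smul_right, real_inner_smul_right]
      have h3 : (⟪Λ, t • u⟫ : ℝ) = t * ⟪Λ, u⟫ := real_inner_smul_right _ _ _
      rw [h3] at htlam
      have := mul_nonneg hs0S.1 hΛw
      linarith
    · rw [inner_add_right, real_inner_smul_right, real_inner_smul_right, hβu, hβw,
        mul_zero, add_zero, mul_div_assoc, div_self (ne_of_gt huu), mul_one]
  -- measure comparison
  have hA1 : A ⊆ (fun t : ℝ => t • u) '' S₁ := by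
    rintro y ⟨hyP, hy0, hyβ, hylam⟩
    have hy := hdec y hy0
    refine ⟨⟪u, y⟫ / ⟪u, u⟫, ⟨?_, ?_, ?_⟩, hy.symm⟩
    · rw [hy, real_inner_smul_right, hβu] at hyβ
      nlinarith
    · rw [← hy]; exact hyP
    · rw [← hy]; exact hylam
  have lip1 : LipschitzWith ‖u‖₊ (fun t : ℝ => t • u) := by
    apply LipschitzWith.of_dist_le_mul
    intro x y
    rw [dist_eq_norm, ← sub_smul, norm_smul, Real.dist_eq, coe_nnnorm, Real.norm_eq_abs,
      mul_comm]
  set K2 : ℝ≥0 := (‖β‖ / ⟪u, u⟫).toNNReal with hK2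
  have lip2 : LipschitzWith K2 (fun y : Euc2 => ⟪β, y⟫ / ⟪u, u⟫) := by
    apply LipschitzWith.of_dist_le_mul
    intro x y
    rw [Real.dist_eq, hK2, Real.coe_toNNReal _ (by positivity), dist_eq_norm]
    have h1 : ⟪β, x⟫ / ⟪u, u⟫ - ⟪β, y⟫ / ⟪u, u⟫ = ⟪β, x - y⟫ / ⟪u, u⟫ := by
      rw [inner_sub_right β x y]; ring
    rw [h1, abs_div, abs_of_pos huu, div_mul_eq_mul_div]
    gcongr
    exact abs_real_inner_le_norm β (x - y)
  have hS1B : S₁ ⊆ (fun y : Euc2 => ⟪β, y⟫ / ⟪u, u⟫) '' B := by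
    intro t ht
    obtain ⟨y, hyB, hval⟩ := key t ht
    exact ⟨y, hyB, hval⟩
  have hreal : (μH[(1:ℝ)] : Measure ℝ) = volume := MeasureTheory.hausdorffMeasure_real
  have h1 : μH[(1:ℝ)] A ≤ (‖u‖₊ : ℝ≥0∞) ^ (1:ℝ) * μH[(1:ℝ)] S₁ :=
    le_trans (measure_mono hA1) (lip1.hausdorffMeasure_image_le (by norm_num) S₁)
  have h2 : μH[(1:ℝ)] S₁ ≤ (K2 : ℝ≥0∞) ^ (1:ℝ) * μH[(1:ℝ)] B := by
    calc μH[(1:ℝ)] S₁ = volume S₁ := by rw [hreal]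
    _ ≤ volume ((fun y : Euc2 => ⟪β, y⟫ / ⟪u, u⟫) '' B) := measure_mono hS1B
    _ = μH[(1:ℝ)] ((fun y : Euc2 => ⟪β, y⟫ / ⟪u, u⟫) '' B) := by rw [hreal]
    _ ≤ _ := lip2.hausdorffMeasure_image_le (by norm_num) B
  have hconst : (‖u‖₊ : ℝ≥0∞) ^ (1:ℝ) * (K2 : ℝ≥0∞) ^ (1:ℝ)
      = ENNReal.ofReal (‖u‖ * (‖β‖ / ⟪u, u⟫)) := by
    rw [ENNReal.rpow_one, ENNReal.rpow_one, ENNReal.ofReal_mul (norm_nonneg u),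
      ofReal_norm u]
    rfl
  calc μH[(1:ℝ)] A ≤ (‖u‖₊ : ℝ≥0∞) ^ (1:ℝ) * ((K2 : ℝ≥0∞) ^ (1:ℝ) * μH[(1:ℝ)] B) :=
        le_trans h1 (mul_le_mul_right h2 _)
  _ = ((‖u‖₊ : ℝ≥0∞) ^ (1:ℝ) * (K2 : ℝ≥0∞) ^ (1:ℝ)) * μH[(1:ℝ)] B := by rw [mul_assoc]
  _ = ENNReal.ofReal (‖u‖ * (‖β‖ / ⟪u, u⟫)) * μH[(1:ℝ)] B := by rw [hconst]

lemma swap_li {α β : Euc2} (hα : α ≠ 0) (hind : LinearIndependent ℝ ![α, β]) :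
    LinearIndependent ℝ ![β, α] := by
  obtain ⟨hβ0, hno⟩ : β ≠ 0 ∧ ∀ a : ℝ, a • β ≠ α := by
    simpa using linearIndependent_fin2.mp hind
  rw [linearIndependent_fin2]
  refine ⟨by simpa using hα, ?_⟩
  intro a h
  simp only [Matrix.cons_val_one, Matrix.head_cons, Matrix.cons_val_zero] at h
  rcases eq_or_ne a 0 with rfl | ha
  · rw [zero_smul] at h; exact hβ0 h.symm
  · exact hno a⁻¹ (by rw [← h, smul_smul, inv_mul_cancel₀ ha, one_smul])

/-- Let `α₁, α₂` be linearly independent vectors in `ℝ²` with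
`⟨α₁,α₂⟩ ≤ 0`, generating a finite reflection group `W` with dominant chamber
`V₊ = {⟨α₁,·⟩ ≥ 0, ⟨α₂,·⟩ ≥ 0}`, and let `P` be a `W`-invariant convex polytope with
nonempty interior. Then there is a constant `c > 0` depending only on `P, α₁, α₂`
such that for every `Λ ∈ V₊` and `λ ∈ ℝ`,
`H¹({y ∈ ∂P ∩ V₊ : ⟨Λ,y⟩ ≥ λ}) ≥ c · H¹({y ∈ P ∩ ∂V₊ : ⟨Λ,y⟩ ≥ λ})`. -/
theorem stmt8 (α₁ α₂ : Euc2) (hα₁ : α₁ ≠ 0) (hα₂ : α₂ ≠ 0)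
    (hind : LinearIndependent ℝ ![α₁, α₂]) (hobtuse : ⟪α₁, α₂⟫ ≤ 0)
    (W : Subgroup (Euc2 ≃ₗᵢ[ℝ] Euc2))
    (hW : W = Subgroup.closure
        {g : Euc2 ≃ₗᵢ[ℝ] Euc2 |
          (∀ x, g x = x - (2 * ⟪α₁, x⟫ / ⟪α₁, α₁⟫) • α₁) ∨
          (∀ x, g x = x - (2 * ⟪α₂, x⟫ / ⟪α₂, α₂⟫) • α₂)})
    (hWfin : Finite W)
    (P : Set Euc2) (V : Finset Euc2) (hP : P = convexHull ℝ (V : Set Euc2))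
    (hPint : (interior P).Nonempty)
    (hPW : ∀ g ∈ W, ∀ y ∈ P, g y ∈ P) :
    ∃ c : ℝ, 0 < c ∧
      ∀ Λ : Euc2, 0 ≤ ⟪α₁, Λ⟫ → 0 ≤ ⟪α₂, Λ⟫ → ∀ lam : ℝ,
        ENNReal.ofReal c *
            μH[(1 : ℝ)] {y | y ∈ P ∩ frontier {z : Euc2 | 0 ≤ ⟪α₁, z⟫ ∧ 0 ≤ ⟪α₂, z⟫} ∧
              lam ≤ ⟪Λ, y⟫} ≤
          μH[(1 : ℝ)] {y | y ∈ frontier P ∩ {z : Euc2 | 0 ≤ ⟪α₁, z⟫ ∧ 0 ≤ ⟪α₂, z⟫} ∧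
            lam ≤ ⟪Λ, y⟫} := by
  have hPc : IsCompact P := by
    rw [hP]; exact V.finite_toSet.isCompact_convexHull ℝ
  have hobtuse' : ⟪α₂, α₁⟫ ≤ 0 := by rw [real_inner_comm]; exact hobtuse
  obtain ⟨K₁, hK₁, hbound₁⟩ := wall_bound α₁ α₂ hind hobtuse P hPc
  obtain ⟨K₂, hK₂, hbound₂⟩ := wall_bound α₂ α₁ (swap_li hα₁ hind) hobtuse' P hPc
  refine ⟨(K₁ + K₂)⁻¹, by positivity, ?_⟩
  intro Λ hΛ₁ hΛ₂ lam
  set Q : Set Euc2 := {z : Euc2 | 0 ≤ ⟪α₁, z⟫ ∧ 0 ≤ ⟪α₂, z⟫} with hQ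
  have hQclosed : IsClosed Q := by
    have : Q = {z : Euc2 | 0 ≤ ⟪α₁, z⟫} ∩ {z : Euc2 | 0 ≤ ⟪α₂, z⟫} := rfl
    rw [this]
    exact (isClosed_le continuous_const (innerSL ℝ α₁).continuous).inter
      (isClosed_le continuous_const (innerSL ℝ α₂).continuous)
  set A : Set Euc2 := {y | y ∈ P ∩ frontier Q ∧ lam ≤ ⟪Λ, y⟫} with hAdef
  set W₁ : Set Euc2 := {y : Euc2 | y ∈ P ∧ ⟪α₁, y⟫ = 0 ∧ 0 ≤ ⟪α₂, y⟫ ∧ lam ≤ ⟪Λ, y⟫} with hW₁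
  set W₂ : Set Euc2 := {y : Euc2 | y ∈ P ∧ ⟪α₂, y⟫ = 0 ∧ 0 ≤ ⟪α₁, y⟫ ∧ lam ≤ ⟪Λ, y⟫} with hW₂
  set B : Set Euc2 := {y | y ∈ frontier P ∩ Q ∧ lam ≤ ⟪Λ, y⟫} with hBdef
  -- the two lower-bound sets in the lemma coincide with B
  have hB₁ : {y : Euc2 | y ∈ frontier P ∧ 0 ≤ ⟪α₁, y⟫ ∧ 0 ≤ ⟪α₂, y⟫ ∧ lam ≤ ⟪Λ, y⟫} = B := by
    ext y; simp only [hBdef, hQ, Set.mem_setOf_eq, Set.mem_inter_iff]; tauto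
  have hB₂ : {y : Euc2 | y ∈ frontier P ∧ 0 ≤ ⟪α₂, y⟫ ∧ 0 ≤ ⟪α₁, y⟫ ∧ lam ≤ ⟪Λ, y⟫} = B := by
    ext y; simp only [hBdef, hQ, Set.mem_setOf_eq, Set.mem_inter_iff]; tauto
  have hAsub : A ⊆ W₁ ∪ W₂ := by
    rintro y ⟨⟨hyP, hyF⟩, hylam⟩
    have hyQ : y ∈ Q := hQclosed.closure_eq ▸ frontier_subset_closure hyF
    have hnotint : y ∉ interior Q := fun h => hyF.2 h
    by_cases h1 : ⟪α₁, y⟫ = 0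
    · exact Or.inl ⟨hyP, h1, hyQ.2, hylam⟩
    by_cases h2 : ⟪α₂, y⟫ = 0
    · exact Or.inr ⟨hyP, h2, hyQ.1, hylam⟩
    exfalso
    apply hnotint
    have hopen : IsOpen ({z : Euc2 | 0 < ⟪α₁, z⟫} ∩ {z : Euc2 | 0 < ⟪α₂, z⟫}) :=
      (isOpen_lt continuous_const (innerSL ℝ α₁).continuous).inter
        (isOpen_lt continuous_const (innerSL ℝ α₂).continuous)
    have hsub : ({z : Euc2 | 0 < ⟪α₁, z⟫} ∩ {z : Euc2 | 0 < ⟪α₂, z⟫}) ⊆ Q :=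
      fun z hz => ⟨le_of_lt hz.1, le_of_lt hz.2⟩
    exact interior_maximal hsub hopen ⟨lt_of_le_of_ne hyQ.1 (Ne.symm h1),
      lt_of_le_of_ne hyQ.2 (Ne.symm h2)⟩
  have hm : μH[(1:ℝ)] A ≤ ENNReal.ofReal (K₁ + K₂) * μH[(1:ℝ)] B := by
    calc μH[(1:ℝ)] A ≤ μH[(1:ℝ)] (W₁ ∪ W₂) := measure_mono hAsub
    _ ≤ μH[(1:ℝ)] W₁ + μH[(1:ℝ)] W₂ := measure_union_le _ _
    _ ≤ ENNReal.ofReal K₁ * μH[(1:ℝ)] B + ENNReal.ofReal K₂ * μH[(1:ℝ)] B := by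
        have b1 := hbound₁ Λ hΛ₁ hΛ₂ lam
        have b2 := hbound₂ Λ hΛ₂ hΛ₁ lam
        rw [hB₁] at b1
        rw [hB₂] at b2
        exact add_le_add b1 b2
    _ = ENNReal.ofReal (K₁ + K₂) * μH[(1:ℝ)] B := by
        rw [← add_mul, ← ENNReal.ofReal_add (le_of_lt hK₁) (le_of_lt hK₂)]
  calc ENNReal.ofReal (K₁ + K₂)⁻¹ * μH[(1:ℝ)] A
      ≤ ENNReal.ofReal (K₁ + K₂)⁻¹ * (ENNReal.ofReal (K₁ + K₂) * μH[(1:ℝ)] B) :=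
        mul_le_mul_right hm _
  _ = (ENNReal.ofReal (K₁ + K₂)⁻¹ * ENNReal.ofReal (K₁ + K₂)) * μH[(1:ℝ)] B := by
        rw [mul_assoc]
  _ = μH[(1:ℝ)] B := by
        rw [← ENNReal.ofReal_mul (by positivity), inv_mul_cancel₀ (by positivity),
          ENNReal.ofReal_one, one_mul]
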